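/- arXiv:1905.05473 — 2 statements merged into one kernel-verified Lean document; each statement's English description precedes it below -/
import Mathlib

section
/- Let Ω ⊂ ℝ² be a bounded measurable set and 1 < s ≤ 2. If w₁, w₂ : Ω → ℝ are a.e. positive measurable functions with w₁, w₂ ∈ L^{s/(2-s)}(Ω), then ‖w₁ − w₂‖_{L^s(Ω)} ≤ (‖w₁‖_{L^{s/(2-s)}(Ω)}^{1/2} + ‖w₂‖_{L^{s/(2-s)}(Ω)}^{1/2}) · ‖√w₁ − √w₂‖_{L²(Ω)}. -/
open MeasureTheory
open scoped ENNReal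

theorem stmt_2 (Ω : Set (ℝ × ℝ)) (hΩm : MeasurableSet Ω) (hΩb : Bornology.IsBounded Ω)
    (s : ℝ) (hs1 : 1 < s) (hs2 : s ≤ 2)
    (w₁ w₂ : ℝ × ℝ → ℝ) (hw₁m : Measurable w₁) (hw₂m : Measurable w₂)
    (hw₁ : ∀ᵐ x ∂(volume.restrict Ω), 0 < w₁ x)
    (hw₂ : ∀ᵐ x ∂(volume.restrict Ω), 0 < w₂ x)
    (p : ℝ≥0∞) (hp : p = if s = 2 then ∞ else ENNReal.ofReal (s / (2 - s)))
    (hw₁p : MemLp w₁ p (volume.restrict Ω)) (hw₂p : MemLp w₂ p (volume.restrict Ω)) :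
    eLpNorm (fun x => w₁ x - w₂ x) (ENNReal.ofReal s) (volume.restrict Ω) ≤
      ((eLpNorm w₁ p (volume.restrict Ω)) ^ ((1 : ℝ) / 2) +
        (eLpNorm w₂ p (volume.restrict Ω)) ^ ((1 : ℝ) / 2)) *
        eLpNorm (fun x => Real.sqrt (w₁ x) - Real.sqrt (w₂ x)) 2 (volume.restrict Ω) := by
  set μ := volume.restrict Ω
  set r : ℝ≥0∞ := 2 * p with hr
  have hs0 : 0 < s := lt_trans one_pos hs1
  -- exponent relation : 1 / ofReal s = 1 / r + 1 / 2
  have hpqr : 1 / ENNReal.ofReal s = 1 / r + 1 / 2 := by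
    rcases eq_or_lt_of_le hs2 with h2 | h2
    · subst h2
      rw [hr, hp, if_pos rfl, ENNReal.mul_top (by norm_num)]
      simp [ENNReal.ofReal_ofNat]
    · have hpne : s ≠ 2 := ne_of_lt h2
      have h2s : 0 < 2 - s := by linarith
      rw [hr, hp, if_neg hpne]
      rw [show (2 : ℝ≥0∞) * ENNReal.ofReal (s / (2 - s)) =
          ENNReal.ofReal (2 * (s / (2 - s))) by
        rw [ENNReal.ofReal_mul (by norm_num)]; norm_num]
      rw [one_div, one_div, one_div, ← ENNReal.ofReal_inv_of_pos hs0,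
        ← ENNReal.ofReal_inv_of_pos (by positivity),
        show (2 : ℝ≥0∞) = ENNReal.ofReal 2 by norm_num,
        ← ENNReal.ofReal_inv_of_pos (by norm_num),
        ← ENNReal.ofReal_add (by positivity) (by norm_num)]
      congr 1
      field_simp
      ring
  have hr1 : 1 ≤ r := by
    rcases eq_or_lt_of_le hs2 with h2 | h2
    · subst h2; simp [hr, hp]
    · have h2s : 0 < 2 - s := by linarith
      rw [hr, hp, if_neg (ne_of_lt h2)]
      calc (1 : ℝ≥0∞) = ENNReal.ofReal 1 := by norm_num
        _ ≤ ENNReal.ofReal (s / (2 - s)) := by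
            apply ENNReal.ofReal_le_ofReal
            rw [le_div_iff₀ h2s]; linarith
        _ ≤ 2 * ENNReal.ofReal (s / (2 - s)) := by
            nth_rw 1 [← one_mul (ENNReal.ofReal (s / (2 - s)))]
            exact mul_le_mul_left (by norm_num) _
  -- measurability
  have hm1 : AEStronglyMeasurable (fun x => Real.sqrt (w₁ x)) μ :=
    (hw₁m.sqrt).aestronglyMeasurable
  have hm2 : AEStronglyMeasurable (fun x => Real.sqrt (w₂ x)) μ :=
    (hw₂m.sqrt).aestronglyMeasurable
  -- pointwise factorization of the norm
  have hfac : eLpNorm (fun x => w₁ x - w₂ x) (ENNReal.ofReal s) μ =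
      eLpNorm (fun x => (Real.sqrt (w₁ x) + Real.sqrt (w₂ x)) *
        (Real.sqrt (w₁ x) - Real.sqrt (w₂ x))) (ENNReal.ofReal s) μ := by
    apply eLpNorm_congr_ae
    filter_upwards [hw₁, hw₂] with x h1 h2
    have e1 := Real.sq_sqrt h1.le
    have e2 := Real.sq_sqrt h2.le
    nlinarith [e1, e2]
  rw [hfac]
  -- Hölder
  have hholder : eLpNorm (fun x => (Real.sqrt (w₁ x) + Real.sqrt (w₂ x)) *
      (Real.sqrt (w₁ x) - Real.sqrt (w₂ x))) (ENNReal.ofReal s) μ ≤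
      eLpNorm (fun x => Real.sqrt (w₁ x) + Real.sqrt (w₂ x)) r μ *
      eLpNorm (fun x => Real.sqrt (w₁ x) - Real.sqrt (w₂ x)) 2 μ := by
    have := eLpNorm_le_eLpNorm_mul_eLpNorm_of_nnnorm (hm1.add hm2) (hm1.sub hm2)
      (· * ·) 1 (Filter.Eventually.of_forall fun x => by rw [one_mul]; exact nnnorm_mul_le _ _)
      (hpqr := ⟨by simpa only [one_div] using hpqr.symm⟩)
    rwa [ENNReal.coe_one, one_mul] at this
  refine le_trans hholder (mul_le_mul_left ?_ _)
  -- triangle inequality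
  have htri : eLpNorm (fun x => Real.sqrt (w₁ x) + Real.sqrt (w₂ x)) r μ ≤
      eLpNorm (fun x => Real.sqrt (w₁ x)) r μ + eLpNorm (fun x => Real.sqrt (w₂ x)) r μ :=
    eLpNorm_add_le hm1 hm2 hr1
  refine le_trans htri ?_
  -- identify eLpNorm of sqrt
  have hsq : ∀ (w : ℝ × ℝ → ℝ), (∀ᵐ x ∂μ, 0 < w x) →
      eLpNorm (fun x => Real.sqrt (w x)) r μ = (eLpNorm w p μ) ^ ((1 : ℝ) / 2) := by
    intro w hw
    have h1 : eLpNorm (fun x => Real.sqrt (w x)) r μ =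
        eLpNorm (fun x => ‖w x‖ ^ ((1 : ℝ) / 2)) r μ := by
      apply eLpNorm_congr_ae
      filter_upwards [hw] with x hx
      rw [Real.norm_eq_abs, abs_of_pos hx, Real.sqrt_eq_rpow]
    rw [h1, eLpNorm_norm_rpow w (by norm_num : (0 : ℝ) < 1 / 2)]
    congr 1
    rw [hr, show ENNReal.ofReal ((1 : ℝ) / 2) = 2⁻¹ by
      rw [ENNReal.ofReal_div_of_pos (by norm_num)]; norm_num]
    rw [mul_comm, ← mul_assoc, ENNReal.inv_mul_cancel (by norm_num) (by norm_num), one_mul]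
  rw [hsq w₁ hw₁, hsq w₂ hw₂]
end

section
/- Let V be a real inner-product-type setting where for weights w₁, w₂ and all f ∈ W₀^{1,2}(Ω): ∬_Ω|w₁−w₂||f|² ≤ B∬_Ω|∇f|², and let λₙ[wᵢ] be defined by the max principle λₙ[wᵢ] = sup over nonzero f in the span Mₙ of the first n eigenfunctions of ∬|∇f|²/∬wᵢ|f|². Then λₙ[w₁] ≥ λₙ[w₂]/(1 + Bλₙ[w₂]). -/
open MeasureTheory

/-- The key one-sided estimate in Lemma 3.1: if the difference of the weights is
controlled by the Dirichlet energy, `∬|w₁−w₂||f|² ≤ B∬|∇f|²`, and `λₙ[wᵢ]` is the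
supremum of the Rayleigh quotient `∬|∇f|²/∬wᵢ|f|²` over nonzero `f` in the span `Mₙ`
of the first `n` eigenfunctions, then `λₙ[w₁] ≥ λₙ[w₂]/(1 + Bλₙ[w₂])`. -/
theorem stmt_19 (Ω : Set (ℝ × ℝ)) (hΩm : MeasurableSet Ω)
    (w₁ w₂ : ℝ × ℝ → ℝ) (B : ℝ) (hB : 0 < B)
    (M : Submodule ℝ ((ℝ × ℝ) → ℝ)) (hMfin : FiniteDimensional ℝ M)
    (hpos : ∀ f ∈ M, f ≠ 0 →
      (0 < ∫ x in Ω, w₁ x * (f x) ^ 2) ∧ (0 < ∫ x in Ω, w₂ x * (f x) ^ 2))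
    (hbound : ∀ f ∈ M,
      (∫ x in Ω, |w₁ x - w₂ x| * (f x) ^ 2) ≤ B * ∫ x in Ω, ‖fderiv ℝ f x‖ ^ 2)
    (lam₁ lam₂ : ℝ)
    (hlam₁ : IsLUB {t : ℝ | ∃ f ∈ M, f ≠ 0 ∧
      t = (∫ x in Ω, ‖fderiv ℝ f x‖ ^ 2) / ∫ x in Ω, w₁ x * (f x) ^ 2} lam₁)
    (hlam₂ : IsLUB {t : ℝ | ∃ f ∈ M, f ≠ 0 ∧
      t = (∫ x in Ω, ‖fderiv ℝ f x‖ ^ 2) / ∫ x in Ω, w₂ x * (f x) ^ 2} lam₂)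
    (hlam₂0 : 0 ≤ lam₂) :
    lam₁ ≥ lam₂ / (1 + B * lam₂) := by
  have key : ∀ f ∈ M, f ≠ 0 →
      (∫ x in Ω, w₁ x * (f x) ^ 2) ≤
        (∫ x in Ω, w₂ x * (f x) ^ 2) + B * ∫ x in Ω, ‖fderiv ℝ f x‖ ^ 2 := by
    intro f hfM hf0
    have h1 := (hpos f hfM hf0).1
    have h2 := (hpos f hfM hf0).2
    have hi1 : IntegrableOn (fun x => w₁ x * (f x) ^ 2) Ω := by
      by_contra h
      rw [MeasureTheory.integral_undef h] at h1
      exact lt_irrefl 0 h1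
    have hi2 : IntegrableOn (fun x => w₂ x * (f x) ^ 2) Ω := by
      by_contra h
      rw [MeasureTheory.integral_undef h] at h2
      exact lt_irrefl 0 h2
    have hdiff : IntegrableOn (fun x => (w₁ x - w₂ x) * (f x) ^ 2) Ω := by
      have := hi1.sub hi2
      convert this using 1
      ext x
      simp [sub_mul]
    have habs : IntegrableOn (fun x => |w₁ x - w₂ x| * (f x) ^ 2) Ω := by
      have := hdiff.abs
      simpa [abs_mul, sq_abs, IntegrableOn] using this
    have h3 : (∫ x in Ω, (w₁ x - w₂ x) * (f x) ^ 2)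
        ≤ ∫ x in Ω, |w₁ x - w₂ x| * (f x) ^ 2 := by
      refine integral_mono hdiff habs fun x => ?_
      exact mul_le_mul_of_nonneg_right (le_abs_self _) (sq_nonneg _)
    have h4 : (∫ x in Ω, (w₁ x - w₂ x) * (f x) ^ 2)
        = (∫ x in Ω, w₁ x * (f x) ^ 2) - ∫ x in Ω, w₂ x * (f x) ^ 2 := by
      rw [← integral_sub hi1 hi2]
      congr 1
      ext x
      ring
    have h5 := hbound f hfM
    linarith
  have hub : ∀ t ∈ {t : ℝ | ∃ f ∈ M, f ≠ 0 ∧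
      t = (∫ x in Ω, ‖fderiv ℝ f x‖ ^ 2) / ∫ x in Ω, w₂ x * (f x) ^ 2},
      t ≤ lam₁ + B * lam₁ * lam₂ := by
    rintro t ⟨f, hfM, hf0, rfl⟩
    have hDnn : (0:ℝ) ≤ ∫ x in Ω, ‖fderiv ℝ f x‖ ^ 2 :=
      integral_nonneg fun x => by positivity
    have ha₁ := (hpos f hfM hf0).1
    have ha₂ := (hpos f hfM hf0).2
    have h1 : (∫ x in Ω, ‖fderiv ℝ f x‖ ^ 2) / (∫ x in Ω, w₁ x * (f x) ^ 2) ≤ lam₁ :=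
      hlam₁.1 ⟨f, hfM, hf0, rfl⟩
    have h2 : (∫ x in Ω, ‖fderiv ℝ f x‖ ^ 2) / (∫ x in Ω, w₂ x * (f x) ^ 2) ≤ lam₂ :=
      hlam₂.1 ⟨f, hfM, hf0, rfl⟩
    have hlam₁0 : 0 ≤ lam₁ := le_trans (div_nonneg hDnn ha₁.le) h1
    have hk := key f hfM hf0
    set D := ∫ x in Ω, ‖fderiv ℝ f x‖ ^ 2
    set a₁ := ∫ x in Ω, w₁ x * (f x) ^ 2
    set a₂ := ∫ x in Ω, w₂ x * (f x) ^ 2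
    rw [div_le_iff₀ ha₁] at h1
    rw [div_le_iff₀ ha₂] at h2
    rw [div_le_iff₀ ha₂]
    -- D ≤ lam₁ * a₁ ≤ lam₁ * (a₂ + B * D), and D ≤ lam₂ * a₂
    nlinarith [mul_le_mul_of_nonneg_left hk hlam₁0,
      mul_nonneg (mul_nonneg hB.le hlam₁0) ha₂.le,
      mul_le_mul_of_nonneg_left h2 (mul_nonneg hB.le hlam₁0)]
  have hfin : lam₂ ≤ lam₁ + B * lam₁ * lam₂ := hlam₂.2 hub
  have hpos' : (0:ℝ) < 1 + B * lam₂ := by positivity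
  rw [ge_iff_le, div_le_iff₀ hpos']
  linarith
end
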